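/- (Invertibility of the explicit score-driven (ESD) filter, Theorem 1.) Let P ∈ ℝ^{k×k} be symmetric positive definite, α ≤ β with 0 < β < ∞ and λ_min(P) > α⁻, ω ∈ ℝ^k, Φ ∈ ℝ^{k×k}, and set γ := λ_min(P − ΦᵀPΦ). For each t ≥ 1 let ℓ_t : ℝ^k → ℝ be twice continuously differentiable with α·I ⪯ −∇²ℓ_t(θ) ⪯ β·I for all θ ∈ ℝ^k. Suppose two sequences (θ_{t|t})_{t≥0} and (θ̃_{t|t})_{t≥0} in ℝ^k satisfy, for every t ≥ 1, the prediction step θ_{t|t−1} = (I − Φ)ω + Φ θ_{t−1|t−1} and the explicit update θ_{t|t} = θ_{t|t−1} + P⁻¹∇ℓ_t(θ_{t|t−1}), and likewise for (θ̃_{t|t}) with the same functions ℓ_t but a possibly different starting point θ̃_{0|0}. Then for all t ≥ 0, ‖θ_{t|t} − θ̃_{t|t}‖²_P ≤ τ_ex^t · ‖θ_{0|0} − θ̃_{0|0}‖²_P, where τ_ex := (1 − γ⁺/λ_max(P) + γ⁻/λ_min(P)) · (1 − min{ α⁺/λ_max(P) − α⁻/λ_min(P) , (2λ_min(P) − β)/λ_min(P)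 })². In particular, if τ_ex < 1 then ‖θ_{t|t} − θ̃_{t|t}‖ → 0 as t → ∞ (exponentially fast) for any starting points. -/

import Mathlib

open Matrix

/-- Smallest eigenvalue of a (Hermitian) real matrix; junk value 0 otherwise. -/
noncomputable def lMin {k : ℕ} (A : Matrix (Fin k) (Fin k) ℝ) : ℝ :=
  letI := Classical.propDecidable A.IsHermitian
  if h : A.IsHermitian then ⨅ i, h.eigenvalues i else 0

/-- Largest eigenvalue of a (Hermitian) real matrix; junk value 0 otherwise. -/
noncomputable def lMax {k : ℕ} (A : Matrix (Fin k) (Fin k) ℝ) : ℝ :=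
  letI := Classical.propDecidable A.IsHermitian
  if h : A.IsHermitian then ⨆ i, h.eigenvalues i else 0

/-- P-weighted squared vector norm `‖x‖_P² = xᵀ P x`. -/
def wq {k : ℕ} (P : Matrix (Fin k) (Fin k) ℝ) (x : Fin k → ℝ) : ℝ := x ⬝ᵥ P *ᵥ x

/-- Induced P-weighted matrix norm `‖A‖_P = sup_{x ≠ 0} ‖Ax‖_P / ‖x‖_P`. -/
noncomputable def wMatNorm {k : ℕ} (P A : Matrix (Fin k) (Fin k) ℝ) : ℝ :=
  sSup {r : ℝ | ∃ x : Fin k → ℝ, x ≠ 0 ∧ r = Real.sqrt (wq P (A *ᵥ x)) / Real.sqrt (wq P x)}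

section AuxLemmas

variable {k : ℕ}

lemma ESD.dot_mulVec_left {M : Matrix (Fin k) (Fin k) ℝ} (u v : Fin k → ℝ) :
    (M *ᵥ u) ⬝ᵥ v = u ⬝ᵥ (Mᵀ *ᵥ v) := by
  rw [mulVec_transpose, dotProduct_comm, dotProduct_mulVec, dotProduct_comm]

lemma ESD.dot_mulVec_right {M : Matrix (Fin k) (Fin k) ℝ} (u v : Fin k → ℝ) :
    u ⬝ᵥ (M *ᵥ v) = (Mᵀ *ᵥ u) ⬝ᵥ v := by
  rw [ESD.dot_mulVec_left, Matrix.transpose_transpose]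

lemma ESD.dot_self_nonneg (v : Fin k → ℝ) : 0 ≤ v ⬝ᵥ v :=
  Finset.sum_nonneg fun i _ => mul_self_nonneg _

lemma ESD.posSemidef_of_quad {B : Matrix (Fin k) (Fin k) ℝ} (hB : B.IsHermitian)
    (h : ∀ x : Fin k → ℝ, 0 ≤ x ⬝ᵥ B *ᵥ x) : B.PosSemidef :=
  Matrix.PosSemidef.of_dotProduct_mulVec_nonneg hB fun x => by simpa using h x

lemma ESD.herm_transpose_eq {B : Matrix (Fin k) (Fin k) ℝ} (hB : B.IsHermitian) : Bᵀ = B := by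
  rw [← Matrix.conjTranspose_eq_transpose_of_trivial]; exact hB.eq

lemma ESD.quad_eigen_expand {A : Matrix (Fin k) (Fin k) ℝ} (hA : A.IsHermitian) (x : Fin k → ℝ) :
    x ⬝ᵥ A *ᵥ x = ∑ i, hA.eigenvalues i *
      ((star (hA.eigenvectorUnitary : Matrix (Fin k) (Fin k) ℝ) *ᵥ x) i)^2 ∧
    x ⬝ᵥ x = ∑ i, ((star (hA.eigenvectorUnitary : Matrix (Fin k) (Fin k) ℝ) *ᵥ x) i)^2 := by
  set U : Matrix (Fin k) (Fin k) ℝ := (hA.eigenvectorUnitary : Matrix (Fin k) (Fin k) ℝ) with hU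
  set y := star U *ᵥ x with hy
  have hsU : star U = Uᵀ := by
    rw [Matrix.star_eq_conjTranspose, Matrix.conjTranspose_eq_transpose_of_trivial]
  have hxUz : ∀ z : Fin k → ℝ, x ⬝ᵥ (U *ᵥ z) = y ⬝ᵥ z := by
    intro z
    rw [dotProduct_mulVec, hy, hsU, mulVec_transpose]
  have hUU : U * star U = 1 := Matrix.mem_unitaryGroup_iff.mp hA.eigenvectorUnitary.2
  constructor
  · conv_lhs => rw [hA.spectral_theorem]
    rw [Unitary.conjStarAlgAut_apply, ← Matrix.mulVec_mulVec, ← Matrix.mulVec_mulVec, hxUz]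
    rw [← hy, dotProduct]
    refine Finset.sum_congr rfl fun i _ => ?_
    rw [mulVec_diagonal]
    simp only [Function.comp_apply, RCLike.ofReal_real_eq_id, id_eq]
    ring
  · have : x ⬝ᵥ x = x ⬝ᵥ (U *ᵥ (star U *ᵥ x)) := by
      rw [Matrix.mulVec_mulVec, hUU, Matrix.one_mulVec]
    rw [this, hxUz, ← hy, dotProduct]
    exact Finset.sum_congr rfl fun i _ => (sq (y i)) ▸ rfl

lemma ESD.rayleigh_lower {A : Matrix (Fin k) (Fin k) ℝ} (hA : A.IsHermitian) (x : Fin k → ℝ) :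
    lMin A * (x ⬝ᵥ x) ≤ x ⬝ᵥ A *ᵥ x := by
  obtain ⟨h1, h2⟩ := ESD.quad_eigen_expand hA x
  rw [h1, h2, lMin, dif_pos hA, Finset.mul_sum]
  refine Finset.sum_le_sum fun i _ => ?_
  exact mul_le_mul_of_nonneg_right (ciInf_le (Finite.bddBelow_range _) i) (sq_nonneg _)

lemma ESD.rayleigh_upper {A : Matrix (Fin k) (Fin k) ℝ} (hA : A.IsHermitian) (x : Fin k → ℝ) :
    x ⬝ᵥ A *ᵥ x ≤ lMax A * (x ⬝ᵥ x) := by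
  obtain ⟨h1, h2⟩ := ESD.quad_eigen_expand hA x
  rw [h1, h2, lMax, dif_pos hA, Finset.mul_sum]
  refine Finset.sum_le_sum fun i _ => ?_
  exact mul_le_mul_of_nonneg_right (le_ciSup (Finite.bddAbove_range _) i) (sq_nonneg _)

lemma ESD.opnorm_of_sandwich {A : Matrix (Fin k) (Fin k) ℝ} (hA : A.IsHermitian) {ρ : ℝ}
    (h1 : ∀ x : Fin k → ℝ, -(ρ * (x ⬝ᵥ x)) ≤ x ⬝ᵥ A *ᵥ x)
    (h2 : ∀ x : Fin k → ℝ, x ⬝ᵥ A *ᵥ x ≤ ρ * (x ⬝ᵥ x)) (x : Fin k → ℝ) :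
    (A *ᵥ x) ⬝ᵥ (A *ᵥ x) ≤ ρ^2 * (x ⬝ᵥ x) := by
  set B : Matrix (Fin k) (Fin k) ℝ := ρ • (1 : Matrix (Fin k) (Fin k) ℝ) - A with hBdef
  have hBh : B.IsHermitian := by
    rw [Matrix.IsHermitian, conjTranspose_sub, conjTranspose_smul, conjTranspose_one, hA.eq]
    simp [hBdef]
  have hquadB : ∀ v : Fin k → ℝ, v ⬝ᵥ B *ᵥ v = ρ * (v ⬝ᵥ v) - v ⬝ᵥ A *ᵥ v := by
    intro v
    rw [hBdef, sub_mulVec, dotProduct_sub, smul_mulVec, one_mulVec, dotProduct_smul]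
    simp [smul_eq_mul]
  have hBpsd : B.PosSemidef := ESD.posSemidef_of_quad hBh fun v => by
    rw [hquadB v]; linarith [h2 v]
  have hBle : ∀ v : Fin k → ℝ, v ⬝ᵥ B *ᵥ v ≤ 2 * ρ * (v ⬝ᵥ v) := by
    intro v
    rw [hquadB v]; linarith [h1 v]
  set R := (open scoped MatrixOrder in CFC.sqrt B) with hR
  have hRh : R.IsHermitian := (open scoped MatrixOrder in (Matrix.nonneg_iff_posSemidef.mp (CFC.sqrt_nonneg B)).1)
  have hRR : R * R = B := (open scoped MatrixOrder in CFC.sqrt_mul_sqrt_self B hBpsd.nonneg)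
  have hAA : (A *ᵥ x) ⬝ᵥ (A *ᵥ x) = x ⬝ᵥ (A * A) *ᵥ x := by
    rw [ESD.dot_mulVec_left, ESD.herm_transpose_eq hA, Matrix.mulVec_mulVec]
  have hkey : (ρ^2) • (1 : Matrix (Fin k) (Fin k) ℝ) - A * A = (2*ρ) • B - B * B := by
    rw [hBdef]
    simp only [Matrix.sub_mul, Matrix.mul_sub, Matrix.smul_mul, Matrix.mul_smul,
      Matrix.one_mul, Matrix.mul_one, smul_smul, smul_sub, sub_sub_eq_add_sub]
    module
  have hBB : x ⬝ᵥ (B * B) *ᵥ x ≤ 2 * ρ * (x ⬝ᵥ B *ᵥ x) := by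
    have hRBR : R * B * R = B * B := by
      rw [← hRR, Matrix.mul_assoc, Matrix.mul_assoc, Matrix.mul_assoc]
    have e1 : x ⬝ᵥ (B * B) *ᵥ x = (R *ᵥ x) ⬝ᵥ B *ᵥ (R *ᵥ x) := by
      rw [ESD.dot_mulVec_left, ESD.herm_transpose_eq hRh, Matrix.mulVec_mulVec,
        Matrix.mulVec_mulVec, hRBR]
    have e2 : (R *ᵥ x) ⬝ᵥ (R *ᵥ x) = x ⬝ᵥ B *ᵥ x := by
      rw [ESD.dot_mulVec_left, ESD.herm_transpose_eq hRh, Matrix.mulVec_mulVec, hRR]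
    calc x ⬝ᵥ (B * B) *ᵥ x = (R *ᵥ x) ⬝ᵥ B *ᵥ (R *ᵥ x) := e1
      _ ≤ 2 * ρ * ((R *ᵥ x) ⬝ᵥ (R *ᵥ x)) := hBle _
      _ = 2 * ρ * (x ⬝ᵥ B *ᵥ x) := by rw [e2]
  have hBquad_nonneg : 0 ≤ x ⬝ᵥ B *ᵥ x := by simpa using hBpsd.dotProduct_mulVec_nonneg x
  have hfin : 0 ≤ x ⬝ᵥ ((ρ^2) • (1 : Matrix (Fin k) (Fin k) ℝ) - A * A) *ᵥ x := by
    rw [hkey, sub_mulVec, dotProduct_sub, smul_mulVec, dotProduct_smul]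
    have h3 : (2*ρ) • (x ⬝ᵥ B *ᵥ x) = 2 * ρ * (x ⬝ᵥ B *ᵥ x) := by simp [smul_eq_mul]
    rw [h3]
    linarith
  rw [sub_mulVec, dotProduct_sub, smul_mulVec, one_mulVec, dotProduct_smul] at hfin
  rw [hAA]
  simp only [smul_eq_mul] at hfin
  linarith

lemma ESD.exists_avg_hessian
    (Gt : (Fin k → ℝ) → (Fin k → ℝ)) (Ht : (Fin k → ℝ) → Matrix (Fin k) (Fin k) ℝ)
    (hder : ∀ θv, HasFDerivAt Gt (LinearMap.toContinuousLinearMap (Ht θv).mulVecLin) θv)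
    (hcont : Continuous Ht) (hsymm : ∀ θv, (Ht θv).IsHermitian)
    {a b : ℝ}
    (hlow : ∀ θv (v : Fin k → ℝ), a * (v ⬝ᵥ v) ≤ -(v ⬝ᵥ (Ht θv) *ᵥ v))
    (hup : ∀ θv (v : Fin k → ℝ), -(v ⬝ᵥ (Ht θv) *ᵥ v) ≤ b * (v ⬝ᵥ v))
    (x y : Fin k → ℝ) :
    ∃ M : Matrix (Fin k) (Fin k) ℝ, M.IsHermitian ∧
      Gt x - Gt y = -(M *ᵥ (x - y)) ∧
      (∀ v : Fin k → ℝ, a * (v ⬝ᵥ v) ≤ v ⬝ᵥ M *ᵥ v ∧ v ⬝ᵥ M *ᵥ v ≤ b * (v ⬝ᵥ v)) := by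
  set d := x - y with hd
  set L : ℝ → (Fin k → ℝ) := fun s => y + s • d with hL
  have hLcont : Continuous L := continuous_const.add (continuous_id.smul continuous_const)
  have hentry : ∀ i j, Continuous fun s => Ht (L s) i j := by
    intro i j
    have h1 : Continuous fun s => Ht (L s) i := (continuous_apply i).comp (hcont.comp hLcont)
    exact (continuous_apply j).comp h1
  set M : Matrix (Fin k) (Fin k) ℝ :=
    Matrix.of fun i j => -∫ s in (0:ℝ)..1, Ht (L s) i j with hM
  have hcontHv : ∀ (v : Fin k → ℝ) i, Continuous fun s => (Ht (L s) *ᵥ v) i := by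
    intro v i
    simp only [Matrix.mulVec, dotProduct]
    exact continuous_finset_sum _ fun j _ => (hentry i j).mul continuous_const
  have hMv : ∀ (v : Fin k → ℝ) i, (M *ᵥ v) i = -∫ s in (0:ℝ)..1, (Ht (L s) *ᵥ v) i := by
    intro v i
    have e1 : ∀ j : Fin k, (-∫ s in (0:ℝ)..1, Ht (L s) i j) * v j
        = -∫ s in (0:ℝ)..1, Ht (L s) i j * v j := fun j => by
      rw [intervalIntegral.integral_mul_const, neg_mul]
    have h2 : (M *ᵥ v) i = ∑ j, (-∫ s in (0:ℝ)..1, Ht (L s) i j * v j) := by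
      simp only [Matrix.mulVec, dotProduct, hM, Matrix.of_apply]
      exact Finset.sum_congr rfl fun j _ => e1 j
    rw [h2, Finset.sum_neg_distrib, ← intervalIntegral.integral_finset_sum]
    · simp only [Matrix.mulVec, dotProduct]
    · exact fun j _ => ((hentry i j).mul continuous_const).intervalIntegrable _ _
  refine ⟨M, ?_, ?_, ?_⟩
  · refine Matrix.IsHermitian.ext fun i j => ?_
    have hsij : ∀ s : ℝ, Ht (L s) j i = Ht (L s) i j := fun s => (hsymm (L s)).apply i j
    simp only [star_trivial, hM, Matrix.of_apply]
    exact congrArg Neg.neg (intervalIntegral.integral_congr fun s _ => hsij s)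
  · have hline : ∀ s : ℝ, HasDerivAt L d s := fun s => by
      simpa [hL] using ((hasDerivAt_id s).smul_const d).const_add y
    have hGd : ∀ s : ℝ, HasDerivAt (fun s => Gt (L s)) (Ht (L s) *ᵥ d) s := fun s => by
      have := (hder (L s)).comp_hasDerivAt s (hline s)
      exact this
    have hGdi : ∀ (i : Fin k) (s : ℝ), HasDerivAt (fun s => Gt (L s) i) ((Ht (L s) *ᵥ d) i) s := by
      intro i s
      exact ((ContinuousLinearMap.proj i : (Fin k → ℝ) →L[ℝ] ℝ).hasFDerivAt).comp_hasDerivAt s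
        (hGd s)
    funext i
    have hftc : ∫ s in (0:ℝ)..1, (Ht (L s) *ᵥ d) i = Gt (L 1) i - Gt (L 0) i :=
      intervalIntegral.integral_eq_sub_of_hasDerivAt (fun s _ => hGdi i s)
        ((hcontHv d i).intervalIntegrable _ _)
    have hL1 : L 1 = x := by simp [hL, hd]
    have hL0 : L 0 = y := by simp [hL]
    have hMd := hMv d i
    rw [hL1, hL0] at hftc
    simp only [Pi.sub_apply, Pi.neg_apply, hMd, hftc, neg_sub]
  · intro v
    have hq : v ⬝ᵥ M *ᵥ v = ∫ s in (0:ℝ)..1, -(v ⬝ᵥ Ht (L s) *ᵥ v) := by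
      have e1 : ∀ i : Fin k, v i * (M *ᵥ v) i
          = -∫ s in (0:ℝ)..1, v i * (Ht (L s) *ᵥ v) i := fun i => by
        rw [hMv v i, mul_neg, ← intervalIntegral.integral_const_mul]
      have h2 : v ⬝ᵥ M *ᵥ v = ∑ i, (-∫ s in (0:ℝ)..1, v i * (Ht (L s) *ᵥ v) i) := by
        simp only [dotProduct]
        exact Finset.sum_congr rfl fun i _ => e1 i
      rw [h2, Finset.sum_neg_distrib, ← intervalIntegral.integral_finset_sum, ←
        intervalIntegral.integral_neg]
      · simp only [dotProduct]
      · exact fun i _ => (continuous_const.mul (hcontHv v i)).intervalIntegrable _ _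
    have hcontq : Continuous fun s => -(v ⬝ᵥ Ht (L s) *ᵥ v) := by
      simp only [dotProduct]
      exact (continuous_finset_sum _ fun i _ => continuous_const.mul (hcontHv v i)).neg
    have hconst : ∀ cst : ℝ, (∫ _ in (0:ℝ)..1, cst) = cst := fun cst => by simp
    constructor
    · rw [hq, ← hconst (a * (v ⬝ᵥ v))]
      exact intervalIntegral.integral_mono_on zero_le_one
        (intervalIntegrable_const) (hcontq.intervalIntegrable _ _)
        (fun s _ => hlow (L s) v)
    · rw [hq, ← hconst (b * (v ⬝ᵥ v))]
      exact intervalIntegral.integral_mono_on zero_le_one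
        (hcontq.intervalIntegrable _ _) (intervalIntegrable_const)
        (fun s _ => hup (L s) v)

end AuxLemmas
open Filter

set_option maxHeartbeats 2000000 in
theorem esd_filter_invertibility {k : ℕ}
    (P Φ : Matrix (Fin k) (Fin k) ℝ) (hP : P.PosDef) (ω : Fin k → ℝ)
    (α β : ℝ) (hαβ : α ≤ β) (hβ : 0 < β) (hpen : max (-α) 0 < lMin P)
    (ℓ : ℕ → (Fin k → ℝ) → ℝ)
    (G : ℕ → (Fin k → ℝ) → (Fin k → ℝ))
    (Hs : ℕ → (Fin k → ℝ) → Matrix (Fin k) (Fin k) ℝ)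
    (hgrad : ∀ t θv, HasFDerivAt (ℓ t)
      (∑ i, G t θv i • (ContinuousLinearMap.proj i : (Fin k → ℝ) →L[ℝ] ℝ)) θv)
    (hhess : ∀ t θv, HasFDerivAt (G t)
      (LinearMap.toContinuousLinearMap (Hs t θv).mulVecLin) θv)
    (hHscont : ∀ t, Continuous (Hs t))
    (hHssymm : ∀ t θv, (Hs t θv).IsHermitian)
    (hcurvlow : ∀ t θv, (-(Hs t θv) - α • (1 : Matrix (Fin k) (Fin k) ℝ)).PosSemidef)
    (hcurvup : ∀ t θv, (β • (1 : Matrix (Fin k) (Fin k) ℝ) - -(Hs t θv)).PosSemidef)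
    (θ θ' : ℕ → (Fin k → ℝ))
    (hrec : ∀ t : ℕ,
      θ (t + 1) = ((1 - Φ) *ᵥ ω + Φ *ᵥ θ t)
        + P⁻¹ *ᵥ G (t + 1) ((1 - Φ) *ᵥ ω + Φ *ᵥ θ t))
    (hrec' : ∀ t : ℕ,
      θ' (t + 1) = ((1 - Φ) *ᵥ ω + Φ *ᵥ θ' t)
        + P⁻¹ *ᵥ G (t + 1) ((1 - Φ) *ᵥ ω + Φ *ᵥ θ' t))
    (τ : ℝ)
    (hτ : τ =
      (1 - max (lMin (P - Φᵀ * P * Φ)) 0 / lMax P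
         + max (-lMin (P - Φᵀ * P * Φ)) 0 / lMin P)
      * (1 - min (max α 0 / lMax P - max (-α) 0 / lMin P)
               ((2 * lMin P - β) / lMin P)) ^ 2) :
    (∀ t : ℕ, wq P (θ t - θ' t) ≤ τ ^ t * wq P (θ 0 - θ' 0)) ∧
      (τ < 1 → Tendsto (fun t => ‖θ t - θ' t‖) atTop (nhds 0)) := by
  -- degenerate case k = 0 : hpen is contradictory
  rcases Nat.eq_zero_or_pos k with hk0 | hkpos
  · exfalso
    have hlm : lMin P = 0 := by
      subst hk0
      rw [lMin, dif_pos hP.1]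
      haveI : IsEmpty (Fin 0) := by infer_instance
      exact Real.iInf_of_isEmpty _
    have := le_max_right (-α) (0:ℝ)
    rw [hlm] at hpen
    linarith
  -- abbreviations
  set c := lMin P with hcdef
  set C := lMax P with hCdef
  have hPh : P.IsHermitian := hP.1
  have hc : 0 < c := lt_of_le_of_lt (le_max_right (-α) 0) hpen
  have hPl : ∀ x : Fin k → ℝ, c * (x ⬝ᵥ x) ≤ wq P x := fun x => ESD.rayleigh_lower hPh x
  have hPu : ∀ x : Fin k → ℝ, wq P x ≤ C * (x ⬝ᵥ x) := fun x => ESD.rayleigh_upper hPh x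
  clear_value c C
  -- a unit vector
  set e₀ : Fin k → ℝ := Pi.single (⟨0, hkpos⟩ : Fin k) (1:ℝ) with he₀
  have he : e₀ ⬝ᵥ e₀ = 1 := by
    simp [he₀, dotProduct, Pi.single_apply]
  have hcC : c ≤ C := by
    have h1 := hPl e₀
    have h2 := hPu e₀
    rw [he] at h1 h2
    linarith
  have hC : 0 < C := lt_of_lt_of_le hc hcC
  -- square root of P
  set Q := (open scoped MatrixOrder in CFC.sqrt P) with hQ
  have hQh : Q.IsHermitian := (open scoped MatrixOrder in (Matrix.nonneg_iff_posSemidef.mp (CFC.sqrt_nonneg P)).1)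
  have hQQ : Q * Q = P := (open scoped MatrixOrder in CFC.sqrt_mul_sqrt_self P hP.posSemidef.nonneg)
  clear_value Q
  have hdetQ : IsUnit Q.det := by
    rw [isUnit_iff_ne_zero]
    intro h
    have : P.det = 0 := by rw [← hQQ, Matrix.det_mul, h, mul_zero]
    exact (ne_of_gt hP.det_pos) this
  have hQ1 : Q * Q⁻¹ = 1 := Matrix.mul_nonsing_inv _ hdetQ
  have hQ1' : Q⁻¹ * Q = 1 := Matrix.nonsing_inv_mul _ hdetQ
  have hQt : Qᵀ = Q := ESD.herm_transpose_eq hQh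
  have hQit : (Q⁻¹)ᵀ = Q⁻¹ := by rw [Matrix.transpose_nonsing_inv, hQt]
  have hPinv : P⁻¹ = Q⁻¹ * Q⁻¹ := by rw [← hQQ, Matrix.mul_inv_rev]
  have hwqQ : ∀ z : Fin k → ℝ, wq P z = (Q *ᵥ z) ⬝ᵥ (Q *ᵥ z) := by
    intro z
    rw [ESD.dot_mulVec_left, hQt, Matrix.mulVec_mulVec, hQQ, wq]
  have hwq_nonneg : ∀ z : Fin k → ℝ, 0 ≤ wq P z := fun z => by
    rw [hwqQ]; exact ESD.dot_self_nonneg _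
  -- bounds for P⁻¹ quadratic form
  have hPinv_up : ∀ u : Fin k → ℝ, c * (u ⬝ᵥ P⁻¹ *ᵥ u) ≤ u ⬝ᵥ u := by
    intro u
    set w := Q⁻¹ *ᵥ u with hw
    have hu : Q *ᵥ w = u := by rw [hw, Matrix.mulVec_mulVec, hQ1, Matrix.one_mulVec]
    have h1 : u ⬝ᵥ P⁻¹ *ᵥ u = w ⬝ᵥ w := by
      rw [hPinv, ← Matrix.mulVec_mulVec, ESD.dot_mulVec_right, hQit]
    have h2 : u ⬝ᵥ u = wq P w := by rw [← hu, hwqQ]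
    rw [h1, h2]; exact hPl w
  have hPinv_lo : ∀ u : Fin k → ℝ, u ⬝ᵥ u ≤ C * (u ⬝ᵥ P⁻¹ *ᵥ u) := by
    intro u
    set w := Q⁻¹ *ᵥ u with hw
    have hu : Q *ᵥ w = u := by rw [hw, Matrix.mulVec_mulVec, hQ1, Matrix.one_mulVec]
    have h1 : u ⬝ᵥ P⁻¹ *ᵥ u = w ⬝ᵥ w := by
      rw [hPinv, ← Matrix.mulVec_mulVec, ESD.dot_mulVec_right, hQit]
    have h2 : u ⬝ᵥ u = wq P w := by rw [← hu, hwqQ]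
    rw [h1, h2]; exact hPu w
  have hPinv_qnonneg : ∀ u : Fin k → ℝ, 0 ≤ u ⬝ᵥ P⁻¹ *ᵥ u := by
    intro u
    have := hPinv_lo u
    nlinarith [ESD.dot_self_nonneg u]
  -- prediction-step contraction
  set γ := lMin (P - Φᵀ * P * Φ) with hγdef
  set aa : ℝ := 1 - max γ 0 / C + max (-γ) 0 / c with haa
  set S := P - Φᵀ * P * Φ with hS
  have hΦH : Φᴴ = Φᵀ := Matrix.conjTranspose_eq_transpose_of_trivial Φ
  have hSh : S.IsHermitian := by
    refine hPh.sub ?_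
    have := Matrix.isHermitian_conjTranspose_mul_mul Φ hPh
    rwa [hΦH] at this
  have hSq : ∀ dv : Fin k → ℝ, dv ⬝ᵥ S *ᵥ dv = wq P dv - wq P (Φ *ᵥ dv) := by
    intro dv
    have h1 : wq P (Φ *ᵥ dv) = dv ⬝ᵥ (Φᵀ * P * Φ) *ᵥ dv := by
      rw [wq, ESD.dot_mulVec_left, Matrix.mulVec_mulVec, Matrix.mulVec_mulVec]
    rw [hS, sub_mulVec, dotProduct_sub, h1, wq]
  have hpred : ∀ dv : Fin k → ℝ, wq P (Φ *ᵥ dv) ≤ aa * wq P dv := by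
    intro dv
    have hray := ESD.rayleigh_lower hSh dv
    rw [← hγdef] at hray
    have hsq := hSq dv
    rcases le_or_gt 0 γ with hγ | hγ
    · have hmax1 : max γ 0 = γ := max_eq_left hγ
      have hmax2 : max (-γ) 0 = 0 := max_eq_right (neg_nonpos.mpr hγ)
      have h1 : γ / C * wq P dv ≤ γ * (dv ⬝ᵥ dv) := by
        have h2 : γ / C * wq P dv ≤ γ / C * (C * (dv ⬝ᵥ dv)) :=
          mul_le_mul_of_nonneg_left (hPu dv) (div_nonneg hγ hC.le)
        have h3 : γ / C * (C * (dv ⬝ᵥ dv)) = γ * (dv ⬝ᵥ dv) := by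
          field_simp
        linarith
      rw [haa, hmax1, hmax2]
      have : (0:ℝ) / c = 0 := zero_div c
      rw [this]
      nlinarith [hwq_nonneg dv]
    · have hmax1 : max γ 0 = 0 := max_eq_right hγ.le
      have hmax2 : max (-γ) 0 = -γ := max_eq_left (by linarith)
      have h1 : (-γ) * (dv ⬝ᵥ dv) ≤ (-γ) / c * wq P dv := by
        have h2 : (-γ) / c * (c * (dv ⬝ᵥ dv)) ≤ (-γ) / c * wq P dv :=
          mul_le_mul_of_nonneg_left (hPl dv) (div_nonneg (by linarith) hc.le)
        have h3 : (-γ) / c * (c * (dv ⬝ᵥ dv)) = (-γ) * (dv ⬝ᵥ dv) := by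
          field_simp
        linarith
      rw [haa, hmax1, hmax2]
      have : (0:ℝ) / C = 0 := zero_div C
      rw [this]
      nlinarith
  -- aa is nonnegative
  have haa0 : 0 ≤ aa := by
    rcases le_or_gt γ 0 with hγ | hγ
    · have hmax1 : max γ 0 = 0 := max_eq_right hγ
      rw [haa, hmax1]
      have h1 : 0 ≤ max (-γ) 0 / c := div_nonneg (le_max_right _ _) hc.le
      simp only [zero_div]
      linarith
    · have hγC : γ ≤ C := by
        have h1 := hSq e₀
        have h2 := ESD.rayleigh_lower hSh e₀
        rw [← hγdef, he] at h2
        have h3 := hPu e₀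
        rw [he] at h3
        have h4 := hwq_nonneg (Φ *ᵥ e₀)
        nlinarith
      have hmax1 : max γ 0 = γ := max_eq_left hγ.le
      have hmax2 : max (-γ) 0 = 0 := max_eq_right (by linarith)
      rw [haa, hmax1, hmax2]
      have h1 : γ / C ≤ 1 := (div_le_one hC).mpr hγC
      simp only [zero_div]
      linarith
  -- update-step contraction
  set m : ℝ := max α 0 / C - max (-α) 0 / c with hm
  set ρ : ℝ := 1 - min m ((2 * c - β) / c) with hρ
  clear_value e₀ γ S aa m ρ
  have hρ1m : 1 - m ≤ ρ := by
    rw [hρ]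
    have := min_le_left m ((2 * c - β) / c)
    linarith
  have hρβc : β / c - 1 ≤ ρ := by
    rw [hρ]
    have h1 := min_le_right m ((2 * c - β) / c)
    have h2 : (2 * c - β) / c = 2 - β / c := by field_simp
    linarith
  have hρ0 : 0 ≤ ρ := by
    rcases le_or_gt m 1 with hm1 | hm1
    · linarith
    · have hα0 : 0 < α := by
        by_contra h
        push_neg at h
        have : max α 0 = 0 := max_eq_right h
        rw [hm, this] at hm1
        have : 0 ≤ max (-α) 0 / c := div_nonneg (le_max_right _ _) hc.le
        simp only [zero_div] at hm1
        linarith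
      have hαC : C < α := by
        have h1 : max α 0 = α := max_eq_left hα0.le
        have h2 : 0 ≤ max (-α) 0 / c := div_nonneg (le_max_right _ _) hc.le
        rw [hm, h1] at hm1
        have h3 : 1 < α / C := by linarith
        have h4 := (lt_div_iff₀ hC).mp h3
        linarith
      have hcβ : c ≤ β := by linarith
      have hβc1 : (0:ℝ) ≤ β / c - 1 := by
        have : 1 ≤ β / c := (one_le_div hc).mpr hcβ
        linarith
      exact le_trans hβc1 hρβc
  -- update-step contraction
  have hτeq : τ = aa * ρ^2 := hτ
  have hupd : ∀ (t : ℕ) (x y : Fin k → ℝ),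
      wq P ((x + P⁻¹ *ᵥ G t x) - (y + P⁻¹ *ᵥ G t y)) ≤ ρ^2 * wq P (x - y) := by
    intro t x y
    have hlow' : ∀ θv (v : Fin k → ℝ), α * (v ⬝ᵥ v) ≤ -(v ⬝ᵥ Hs t θv *ᵥ v) := by
      intro θv v
      have h0 := (hcurvlow t θv).dotProduct_mulVec_nonneg v
      simp only [star_trivial] at h0
      rw [sub_mulVec, neg_mulVec, smul_mulVec, one_mulVec, dotProduct_sub,
        dotProduct_neg, dotProduct_smul, smul_eq_mul] at h0
      linarith
    have hup' : ∀ θv (v : Fin k → ℝ), -(v ⬝ᵥ Hs t θv *ᵥ v) ≤ β * (v ⬝ᵥ v) := by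
      intro θv v
      have h0 := (hcurvup t θv).dotProduct_mulVec_nonneg v
      simp only [star_trivial] at h0
      rw [sub_mulVec, neg_mulVec, smul_mulVec, one_mulVec, dotProduct_sub,
        dotProduct_neg, dotProduct_smul, smul_eq_mul] at h0
      linarith
    obtain ⟨M, hMh, hMval, hMquad⟩ := ESD.exists_avg_hessian (G t) (Hs t)
      (hhess t) (hHscont t) (hHssymm t) hlow' hup' x y
    set d := x - y with hd
    have hdiff : (x + P⁻¹ *ᵥ G t x) - (y + P⁻¹ *ᵥ G t y) = (1 - P⁻¹ * M) *ᵥ d := by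
      have h1 : P⁻¹ *ᵥ G t x - P⁻¹ *ᵥ G t y = -((P⁻¹ * M) *ᵥ d) := by
        rw [← Matrix.mulVec_sub, hMval, Matrix.mulVec_neg, Matrix.mulVec_mulVec]
      rw [sub_mulVec, Matrix.one_mulVec]
      calc (x + P⁻¹ *ᵥ G t x) - (y + P⁻¹ *ᵥ G t y)
          = d + (P⁻¹ *ᵥ G t x - P⁻¹ *ᵥ G t y) := by rw [hd]; abel
        _ = d + -((P⁻¹ * M) *ᵥ d) := by rw [h1]
        _ = d - (P⁻¹ * M) *ᵥ d := by abel
    set N := Q⁻¹ * M * Q⁻¹ with hN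
    set T : Matrix (Fin k) (Fin k) ℝ := 1 - N with hT
    have hTQ : Q * (1 - P⁻¹ * M) = T * Q := by
      have e1 : Q * (Q⁻¹ * Q⁻¹ * M) = Q⁻¹ * M := by
        rw [Matrix.mul_assoc, ← Matrix.mul_assoc Q, hQ1, Matrix.one_mul]
      have e2 : T * Q = Q - Q⁻¹ * M := by
        rw [hT, Matrix.sub_mul, Matrix.one_mul, hN, Matrix.mul_assoc (Q⁻¹ * M), hQ1',
          Matrix.mul_one]
      rw [hPinv, Matrix.mul_sub, Matrix.mul_one, e1, e2]
    have hNt : Nᵀ = N := by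
      rw [hN, Matrix.transpose_mul, Matrix.transpose_mul, hQit, ESD.herm_transpose_eq hMh,
        ← Matrix.mul_assoc]
    have hTh : T.IsHermitian := by
      rw [Matrix.IsHermitian, Matrix.conjTranspose_eq_transpose_of_trivial, hT,
        Matrix.transpose_sub, Matrix.transpose_one, hNt]
    have hNq : ∀ w : Fin k → ℝ, w ⬝ᵥ N *ᵥ w = (Q⁻¹ *ᵥ w) ⬝ᵥ M *ᵥ (Q⁻¹ *ᵥ w) := by
      intro w
      rw [hN, ← Matrix.mulVec_mulVec, ← Matrix.mulVec_mulVec, ESD.dot_mulVec_right, hQit]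
    have hzz : ∀ w : Fin k → ℝ, (Q⁻¹ *ᵥ w) ⬝ᵥ (Q⁻¹ *ᵥ w) = w ⬝ᵥ P⁻¹ *ᵥ w := by
      intro w
      rw [ESD.dot_mulVec_left, hQit, Matrix.mulVec_mulVec, ← hPinv]
    have hTq : ∀ w : Fin k → ℝ, w ⬝ᵥ T *ᵥ w = w ⬝ᵥ w - w ⬝ᵥ N *ᵥ w := by
      intro w
      rw [hT, sub_mulVec, one_mulVec, dotProduct_sub]
    have hsand1 : ∀ w : Fin k → ℝ, w ⬝ᵥ T *ᵥ w ≤ ρ * (w ⬝ᵥ w) := by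
      intro w
      have hzq := (hMquad (Q⁻¹ *ᵥ w)).1
      rw [hzz w] at hzq
      rw [hTq w, hNq w]
      have hmw : m * (w ⬝ᵥ w) ≤ α * (w ⬝ᵥ P⁻¹ *ᵥ w) := by
        rcases le_or_gt 0 α with hα | hα
        · have hmax1 : max α 0 = α := max_eq_left hα
          have hmax2 : max (-α) 0 = 0 := max_eq_right (neg_nonpos.mpr hα)
          rw [hm, hmax1, hmax2]
          have h1 : α / C * (w ⬝ᵥ w) ≤ α / C * (C * (w ⬝ᵥ P⁻¹ *ᵥ w)) :=
            mul_le_mul_of_nonneg_left (hPinv_lo w) (div_nonneg hα hC.le)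
          have h2 : α / C * (C * (w ⬝ᵥ P⁻¹ *ᵥ w)) = α * (w ⬝ᵥ P⁻¹ *ᵥ w) := by
            field_simp
            try ring
          simp only [zero_div]
          linarith
        · have hmax1 : max α 0 = 0 := max_eq_right hα.le
          have hmax2 : max (-α) 0 = -α := max_eq_left (by linarith)
          rw [hm, hmax1, hmax2]
          have h1 : (-α) / c * (c * (w ⬝ᵥ P⁻¹ *ᵥ w)) ≤ (-α) / c * (w ⬝ᵥ w) :=
            mul_le_mul_of_nonneg_left (hPinv_up w) (div_nonneg (by linarith) hc.le)
          have h2 : (-α) / c * (c * (w ⬝ᵥ P⁻¹ *ᵥ w)) = (-α) * (w ⬝ᵥ P⁻¹ *ᵥ w) := by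
            field_simp
            try ring
          simp only [zero_div]
          linarith
      have hfin : (1 - m) * (w ⬝ᵥ w) ≤ ρ * (w ⬝ᵥ w) :=
        mul_le_mul_of_nonneg_right hρ1m (ESD.dot_self_nonneg w)
      nlinarith
    have hsand2 : ∀ w : Fin k → ℝ, -(ρ * (w ⬝ᵥ w)) ≤ w ⬝ᵥ T *ᵥ w := by
      intro w
      have hzq := (hMquad (Q⁻¹ *ᵥ w)).2
      rw [hzz w] at hzq
      rw [hTq w, hNq w]
      have hNub : β * (w ⬝ᵥ P⁻¹ *ᵥ w) ≤ β / c * (w ⬝ᵥ w) := by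
        have h1 : β / c * (c * (w ⬝ᵥ P⁻¹ *ᵥ w)) ≤ β / c * (w ⬝ᵥ w) :=
          mul_le_mul_of_nonneg_left (hPinv_up w) (div_nonneg hβ.le hc.le)
        have h2 : β / c * (c * (w ⬝ᵥ P⁻¹ *ᵥ w)) = β * (w ⬝ᵥ P⁻¹ *ᵥ w) := by
          field_simp
          try ring
        linarith
      have hfin : -(ρ * (w ⬝ᵥ w)) ≤ (1 - β / c) * (w ⬝ᵥ w) := by
        have := mul_le_mul_of_nonneg_right hρβc (ESD.dot_self_nonneg w)
        nlinarith [ESD.dot_self_nonneg w]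
      nlinarith
    have hop := ESD.opnorm_of_sandwich hTh hsand2 hsand1 (Q *ᵥ d)
    have hQd : Q *ᵥ ((1 - P⁻¹ * M) *ᵥ d) = T *ᵥ (Q *ᵥ d) := by
      rw [Matrix.mulVec_mulVec, hTQ, ← Matrix.mulVec_mulVec]
    rw [hdiff, hwqQ, hQd]
    calc (T *ᵥ (Q *ᵥ d)) ⬝ᵥ (T *ᵥ (Q *ᵥ d)) ≤ ρ^2 * ((Q *ᵥ d) ⬝ᵥ (Q *ᵥ d)) := hop
      _ = ρ^2 * wq P d := by rw [← hwqQ]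
  -- single-step contraction
  have hτ0 : 0 ≤ τ := by rw [hτeq]; exact mul_nonneg haa0 (sq_nonneg _)
  have hstep : ∀ t : ℕ, wq P (θ (t+1) - θ' (t+1)) ≤ τ * wq P (θ t - θ' t) := by
    intro t
    rw [hrec t, hrec' t]
    have h1 := hupd (t+1) ((1 - Φ) *ᵥ ω + Φ *ᵥ θ t) ((1 - Φ) *ᵥ ω + Φ *ᵥ θ' t)
    have h2 : ((1 - Φ) *ᵥ ω + Φ *ᵥ θ t) - ((1 - Φ) *ᵥ ω + Φ *ᵥ θ' t)
        = Φ *ᵥ (θ t - θ' t) := by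
      rw [Matrix.mulVec_sub]
      abel
    rw [h2] at h1
    have h3 := hpred (θ t - θ' t)
    calc wq P (((1 - Φ) *ᵥ ω + Φ *ᵥ θ t + P⁻¹ *ᵥ G (t+1) ((1 - Φ) *ᵥ ω + Φ *ᵥ θ t))
          - ((1 - Φ) *ᵥ ω + Φ *ᵥ θ' t + P⁻¹ *ᵥ G (t+1) ((1 - Φ) *ᵥ ω + Φ *ᵥ θ' t)))
        ≤ ρ^2 * wq P (Φ *ᵥ (θ t - θ' t)) := h1
      _ ≤ ρ^2 * (aa * wq P (θ t - θ' t)) :=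
          mul_le_mul_of_nonneg_left h3 (sq_nonneg ρ)
      _ = τ * wq P (θ t - θ' t) := by rw [hτeq]; ring
  -- main bound by induction
  have hmain : ∀ t : ℕ, wq P (θ t - θ' t) ≤ τ ^ t * wq P (θ 0 - θ' 0) := by
    intro t
    induction t with
    | zero => simp
    | succ n ih =>
      calc wq P (θ (n+1) - θ' (n+1)) ≤ τ * wq P (θ n - θ' n) := hstep n
        _ ≤ τ * (τ ^ n * wq P (θ 0 - θ' 0)) := mul_le_mul_of_nonneg_left ih hτ0
        _ = τ ^ (n+1) * wq P (θ 0 - θ' 0) := by ring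
  refine ⟨hmain, ?_⟩
  -- convergence
  intro hτ1
  set w0 := wq P (θ 0 - θ' 0) with hw0
  have hlim0 : Tendsto (fun t : ℕ => τ ^ t * w0 / c) atTop (nhds 0) := by
    have h1 := tendsto_pow_atTop_nhds_zero_of_lt_one hτ0 hτ1
    have h2 := (h1.mul_const w0).div_const c
    simpa using h2
  have hb : Tendsto (fun t : ℕ => Real.sqrt (τ ^ t * w0 / c)) atTop (nhds 0) := by
    have := (Real.continuous_sqrt.tendsto 0).comp hlim0
    simpa [Function.comp_def] using this
  refine tendsto_of_tendsto_of_tendsto_of_le_of_le tendsto_const_nhds hb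
    (fun t => norm_nonneg _) ?_
  intro t
  rw [pi_norm_le_iff_of_nonneg (Real.sqrt_nonneg _)]
  intro i
  set dv := θ t - θ' t with hdv
  have hdd : dv ⬝ᵥ dv ≤ τ ^ t * w0 / c := by
    have h1 : c * (dv ⬝ᵥ dv) ≤ τ ^ t * w0 := le_trans (hPl dv) (hmain t)
    rw [le_div_iff₀ hc]
    linarith
  have hii : dv i * dv i ≤ dv ⬝ᵥ dv :=
    Finset.single_le_sum (f := fun j => dv j * dv j)
      (fun j _ => mul_self_nonneg (dv j)) (Finset.mem_univ i)
  have h2 : dv i ^ 2 ≤ τ ^ t * w0 / c := by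
    rw [sq]
    linarith
  have h3 : |dv i| ≤ Real.sqrt (τ ^ t * w0 / c) := by
    rw [← Real.sqrt_sq_eq_abs]
    exact Real.sqrt_le_sqrt h2
  simpa using h3
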